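/- Let k₁ ∈ ℂ with Re(k₁) = 0 and Im(k₁) ≠ 0, and let c₁, c₂ ∈ ℂ with |c₁| ≠ |c₂|. Then for all real x and τ₂, the denominator |c₁|² e^{4i Im(k₁) x} e^{-8 Re(k₁) Im(k₁) τ₂} - |c₂|² is nonzero; i.e., the one-soliton solution q(x,τ₂) = -4i c₁ c₂ Im(k₁) e^{2k₁x + 2i k₁² τ₂} / (|c₁|² e^{4i Im(k₁)x} e^{-8 Re(k₁) Im(k₁) τ₂} - |c₂|²) is nonsingular. -/

import Mathlib

open Complex

/-- For `k₁` purely imaginary with nonzero imaginary part and `|c₁| ≠ |c₂|`, the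
denominator of the nonlocal focusing one-soliton solution never vanishes. -/
theorem stmt_6 (k₁ c₁ c₂ : ℂ) (hre : k₁.re = 0) (him : k₁.im ≠ 0)
    (habs : ‖c₁‖ ≠ ‖c₂‖) :
    ∀ x τ₂ : ℝ,
      ((‖c₁‖ : ℂ) ^ 2 * Complex.exp (4 * Complex.I * (k₁.im : ℂ) * (x : ℂ)) *
          Complex.exp (-8 * (k₁.re : ℂ) * (k₁.im : ℂ) * (τ₂ : ℂ)) -
        (‖c₂‖ : ℂ) ^ 2) ≠ 0 := by
  intro x τ₂ h
  apply habs
  have h1 : (‖c₁‖ : ℂ) ^ 2 * Complex.exp (4 * Complex.I * (k₁.im : ℂ) * (x : ℂ)) *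
      Complex.exp (-8 * (k₁.re : ℂ) * (k₁.im : ℂ) * (τ₂ : ℂ)) = (‖c₂‖ : ℂ) ^ 2 :=
    sub_eq_zero.mp h
  apply_fun (‖·‖) at h1
  simp only [norm_mul, norm_pow, Complex.norm_exp, Complex.norm_real, norm_norm] at h1
  have hre1 : (4 * Complex.I * (k₁.im : ℂ) * (x : ℂ)).re = 0 := by simp
  have hre2 : (-8 * (k₁.re : ℂ) * (k₁.im : ℂ) * (τ₂ : ℂ)).re = 0 := by
    simp [hre]
  rw [hre1, hre2] at h1
  simp at h1
  have := norm_nonneg c₁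
  have := norm_nonneg c₂
  nlinarith [h1]
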